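/- Let (V, l_∘, r_∘) be a representation of an anti-pre-Lie algebra (A, ∘). Then (V*, r_∘* - l_∘*, r_∘*) is a representation of (A, ∘), where f*(x) denotes the negative dual of f(x) acting on V*. -/
import Mathlib


/-- A representation `(V, l, r)` of an anti-pre-Lie algebra `(A, ∘)`. -/
def IsAPLRep {k A V : Type*} [Field k] [AddCommGroup A] [Module k A]
    [AddCommGroup V] [Module k V]
    (c : A →ₗ[k] A →ₗ[k] A) (l r : A → Module.End k V) : Prop :=
  IsLinearMap k l ∧ IsLinearMap k r ∧
  (∀ x y, l (c y x) - l (c x y) = l x * l y - l y * l x) ∧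
  (∀ x y, r (c x y) = l x * r y + r y * l x - r y * r x) ∧
  (∀ x y, l (c y x) - l (c x y) = r x * l y - r y * l x - r x * r y + r y * r x)

/-- the dual representation `(V*, r* - l*, r*)` of a representation of an
anti-pre-Lie algebra, where `f*(x) = -(f x).dualMap`. -/
theorem aplRep_dual {k A V : Type*} [Field k] [AddCommGroup A] [Module k A]
    [AddCommGroup V] [Module k V]
    (c : A →ₗ[k] A →ₗ[k] A) (l r : A → Module.End k V)
    (h : IsAPLRep c l r) :
    IsAPLRep (V := Module.Dual k V) c
      (fun x => (l x).dualMap - (r x).dualMap)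
      (fun x => -((r x).dualMap)) := by
  obtain ⟨hl, hr, h3, h4, h5⟩ := h
  refine ⟨⟨?_, ?_⟩, ⟨?_, ?_⟩, ?_, ?_, ?_⟩
  · intro x y
    ext φ v
    simp [hl.map_add, hr.map_add]
    ring
  · intro a x
    ext φ v
    simp [hl.map_smul, hr.map_smul, mul_sub]
  · intro x y
    ext φ v
    simp [hl.map_add, hr.map_add]
    ring
  · intro a x
    ext φ v
    simp [hr.map_smul]
  · intro x y
    ext φ v
    have e3 := congrArg (fun f : Module.End k V => φ (f v)) (h3 x y)
    have e4 := congrArg (fun f : Module.End k V => φ (f v)) (h4 x y)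
    have e4' := congrArg (fun f : Module.End k V => φ (f v)) (h4 y x)
    have e5 := congrArg (fun f : Module.End k V => φ (f v)) (h5 x y)
    simp [Module.End.mul_apply] at e3 e4 e4' e5 ⊢
    linear_combination -e3 + e4 - e4' + 2*e5
  · intro x y
    ext φ v
    have e4 := congrArg (fun f : Module.End k V => φ (f v)) (h4 x y)
    simp [Module.End.mul_apply] at e4 ⊢
    linear_combination -e4
  · intro x y
    ext φ v
    have e3 := congrArg (fun f : Module.End k V => φ (f v)) (h3 x y)
    have e4 := congrArg (fun f : Module.End k V => φ (f v)) (h4 x y)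
    have e4' := congrArg (fun f : Module.End k V => φ (f v)) (h4 y x)
    have e5 := congrArg (fun f : Module.End k V => φ (f v)) (h5 x y)
    simp [Module.End.mul_apply] at e3 e4 e4' e5 ⊢
    linear_combination e4 - e4' + e5
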